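/- Let h : ℝ → ℝ be an odd strictly increasing bijection that is differentiable at every t ≠ 0 with h′(t) > 0 for t ≠ 0. For c > 0 define H_c : ℝ → ℝ by H_c(t) = h(t + c) − h(c) for t ≥ 0 and H_c(t) = h(t − c) − h(−c) for t ≤ 0. Then H_c is a strictly increasing bijection of ℝ, H_c(0) = 0, and H_c is differentiable at every t ∈ ℝ with H_c′(t) > 0; in particular at t = 0 both one-sided derivatives equal h′(c) = h′(−c). -/

import Mathlib

/-- Cropping out degeneracies: if `h` is an odd strictly increasing bijection of `ℝ`,
differentiable with positive derivative `h′(t)` at every `t ≠ 0`, and `c > 0`, then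
`H_c(t) = h(t+c) − h(c)` for `t ≥ 0`, `H_c(t) = h(t−c) − h(−c)` for `t ≤ 0` is a strictly
increasing bijection of `ℝ` with `H_c(0) = 0` which is everywhere differentiable with
positive derivative; at `t = 0` the derivative equals `h′(c) = h′(−c)`. -/
theorem cropping_out_degeneracies
    (h : ℝ → ℝ) (hodd : ∀ t : ℝ, h (-t) = -h t)
    (hmono : StrictMono h) (hbij : Function.Bijective h)
    (h' : ℝ → ℝ)
    (hderiv : ∀ t : ℝ, t ≠ 0 → HasDerivAt h (h' t) t)
    (hpos : ∀ t : ℝ, t ≠ 0 → 0 < h' t)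
    (c : ℝ) (hc : 0 < c)
    (H : ℝ → ℝ)
    (hHpos : ∀ t : ℝ, 0 ≤ t → H t = h (t + c) - h c)
    (hHneg : ∀ t : ℝ, t ≤ 0 → H t = h (t - c) - h (-c)) :
    StrictMono H ∧ Function.Bijective H ∧ H 0 = 0 ∧
    (∃ H' : ℝ → ℝ, (∀ t : ℝ, HasDerivAt H (H' t) t ∧ 0 < H' t) ∧
      H' 0 = h' c ∧ h' c = h' (-c)) := by
  have hc' : c ≠ 0 := ne_of_gt hc
  have hH0 : H 0 = 0 := by rw [hHpos 0 le_rfl]; simp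
  -- h'(c) = h'(-c)
  have hsym : h' c = h' (-c) := by
    have h1 : HasDerivAt (fun t : ℝ => -h (-t)) (h' (-c)) c := by
      have := ((hderiv (-c) (by linarith)).comp c (hasDerivAt_neg c)).neg
      simpa using (show HasDerivAt (fun t : ℝ => -h (-t)) (-(h' (-c) * -1)) c from this)
    have h2 : HasDerivAt h (h' (-c)) c := by
      refine h1.congr_of_eventuallyEq ?_
      filter_upwards with t using (by rw [hodd t]; ring)
    exact (hderiv c hc').unique h2
  -- strict mono
  have hSM : StrictMono H := by
    intro a b hab
    rcases le_or_gt 0 a with ha | ha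
    · rw [hHpos a ha, hHpos b (le_trans ha hab.le)]
      have := hmono (show a + c < b + c by linarith)
      linarith
    · rcases le_or_gt b 0 with hb | hb
      · rw [hHneg a ha.le, hHneg b hb]
        have := hmono (show a - c < b - c by linarith)
        linarith
      · rw [hHneg a ha.le, hHpos b hb.le]
        have h1 := hmono (show a - c < -c by linarith)
        have h2 := hmono (show c < b + c by linarith)
        linarith
  -- surjective
  have hsurj : Function.Surjective H := by
    intro y
    rcases le_or_gt 0 y with hy | hy
    · obtain ⟨s, hs⟩ := hbij.2 (y + h c)
      have hsc : c ≤ s := by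
        by_contra hlt
        push_neg at hlt
        have := hmono hlt
        linarith
      refine ⟨s - c, ?_⟩
      rw [hHpos (s - c) (by linarith)]
      rw [show s - c + c = s by ring, hs]; ring
    · obtain ⟨s, hs⟩ := hbij.2 (y + h (-c))
      have hsc : s ≤ -c := by
        by_contra hlt
        push_neg at hlt
        have := hmono hlt
        linarith
      refine ⟨s + c, ?_⟩
      rw [hHneg (s + c) (by linarith)]
      rw [show s + c - c = s by ring, hs]; ring
  -- derivative
  refine ⟨hSM, ⟨hSM.injective, hsurj⟩, hH0, ?_⟩
  refine ⟨fun t => if 0 ≤ t then h' (t + c) else h' (t - c), ?_, by norm_num, hsym⟩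
  intro t
  rcases lt_trichotomy t 0 with ht | ht | ht
  · have hne : t - c ≠ 0 := by linarith
    have hd : HasDerivAt (fun s : ℝ => h (s - c) - h (-c)) (h' (t - c)) t := by
      exact (HasDerivAt.comp_sub_const t c (hderiv (t - c) hne)).sub_const (h (-c))
    have hD : HasDerivAt H (h' (t - c)) t := by
      refine hd.congr_of_eventuallyEq ?_
      filter_upwards [Iio_mem_nhds ht] with s hs using hHneg s (le_of_lt hs)
    simpa [not_le.mpr ht] using And.intro hD (hpos _ hne)
  · subst ht
    have hDpos : HasDerivWithinAt H (h' c) (Set.Ici 0) 0 := by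
      have hd : HasDerivAt (fun s : ℝ => h (s + c) - h c) (h' c) 0 := by
        have := (HasDerivAt.comp_add_const 0 c (by simpa using hderiv c hc')).sub_const (h c)
        simpa using this
      exact (hd.hasDerivWithinAt).congr (fun s hs => hHpos s hs) (hHpos 0 le_rfl)
    have hDneg : HasDerivWithinAt H (h' c) (Set.Iic 0) 0 := by
      have hd : HasDerivAt (fun s : ℝ => h (s - c) - h (-c)) (h' c) 0 := by
        have := (HasDerivAt.comp_sub_const 0 c (by simpa using hderiv (-c) (show (-c:ℝ) ≠ 0 by linarith))).sub_const (h (-c))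
        simpa [hsym] using this
      exact (hd.hasDerivWithinAt).congr (fun s hs => hHneg s hs) (hHneg 0 le_rfl)
    have := hDneg.union hDpos
    rw [Set.Iic_union_Ici] at this
    have hD : HasDerivAt H (h' c) 0 := by
      rw [← hasDerivWithinAt_univ]; exact this
    simpa using And.intro hD (hpos c hc')
  · have hne : t + c ≠ 0 := by linarith
    have hd : HasDerivAt (fun s : ℝ => h (s + c) - h c) (h' (t + c)) t := by
      exact (HasDerivAt.comp_add_const t c (hderiv (t + c) hne)).sub_const (h c)
    have hD : HasDerivAt H (h' (t + c)) t := by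
      refine hd.congr_of_eventuallyEq ?_
      filter_upwards [Ioi_mem_nhds ht] with s hs using hHpos s (le_of_lt hs)
    simpa [le_of_lt ht] using And.intro hD (hpos _ hne)
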